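/- In the Acc-DNGD-NSC setup, define γ₀ = L/(1−α₀), the sequences γ_{t+1} = (1−α_t)γ_t and λ₀ = 1, λ_{t+1} = (1−α_t)λ_t, and f̂(t) = (1/n)Σ_i [ f_i(y_i(t)) + ⟨∇f_i(y_i(t)), ȳ(t) − y_i(t)⟩ ]. Define Φ_t : ℝ^N → ℝ by Φ₀(ω) = f(x̄(0)) + (γ₀/2)‖ω − v̄(0)‖² and Φ_{t+1}(ω) = (1−α_t)Φ_t(ω) + α_t[ f̂(t) + ⟨g(t), ω − ȳ(t)⟩ ]. Then: (1) for every ω and t, Φ_t(ω) ≤ f(ω) + λ_t(Φ₀(ω) − f(ω)); and (2) Φ_t(ω) = φ_t* + (γ_t/2)‖ω − v̄(t)‖² for all ω and t, where φ₀* = f(x̄(0)) and φ_{t+1}* = (1−α_t)φ_t* + α_t f̂(t) − (η_t/2)‖g(t)‖² + α_t⟨g(t), v̄(t) − ȳ(t)⟩. -/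

import Mathlib

open scoped RealInnerProductSpace

/-- Coercion of a plain vector into Euclidean space (so that ‖·‖ is the 2-norm). -/
def toE {n : ℕ} (v : Fin n → ℝ) : EuclideanSpace ℝ (Fin n) := WithLp.toLp 2 v

lemma grad_convex_ineq {E : Type*} [NormedAddCommGroup E] [InnerProductSpace ℝ E]
    [CompleteSpace E] (f : E → ℝ) (hdiff : Differentiable ℝ f)
    (hconv : ConvexOn ℝ Set.univ f) (a b : E) :
    f a + ⟪gradient f a, b - a⟫ ≤ f b := by
  have hgrad : HasFDerivAt f ((InnerProductSpace.toDual ℝ E) (gradient f a)) a :=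
    (hdiff a).hasGradientAt.hasFDerivAt
  set φ : ℝ → ℝ := fun θ => f (a + θ • (b - a)) with hφ
  have hline : ∀ θ : ℝ, HasDerivAt (fun θ : ℝ => a + θ • (b - a)) (b - a) θ := by
    intro θ
    simpa using ((hasDerivAt_id θ).smul_const (b - a)).const_add a
  have hd0 : HasDerivAt φ (⟪gradient f a, b - a⟫) 0 := by
    have h0 : a + (0:ℝ) • (b - a) = a := by simp
    have := (h0 ▸ hgrad).comp_hasDerivAt 0 (hline 0)
    rw [h0] at this
    simp only [InnerProductSpace.toDual_apply_apply] at this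
    exact this
  have hφconv : ConvexOn ℝ Set.univ φ := by
    have h := hconv.comp_affineMap (AffineMap.lineMap a b)
    have he : (f ∘ ⇑(AffineMap.lineMap a b)) = φ := by
      funext θ
      simp [φ, AffineMap.lineMap_apply, add_comm]
    simpa [he] using h
  have := hφconv.le_slope_of_hasDerivAt (Set.mem_univ (0:ℝ)) (Set.mem_univ (1:ℝ))
    one_pos hd0
  have hφ0 : φ 0 = f a := by simp [φ]
  have hφ1 : φ 1 = f b := by simp [φ]
  rw [slope_def_field] at this
  rw [hφ0, hφ1] at this
  simp only [sub_zero, div_one] at this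
  linarith

lemma grad_avg {E : Type*} [NormedAddCommGroup E] [InnerProductSpace ℝ E]
    [CompleteSpace E] {n : ℕ} (f : Fin n → E → ℝ) (hdiff : ∀ i, Differentiable ℝ (f i))
    (F : E → ℝ) (hF : F = fun w => (n : ℝ)⁻¹ * ∑ i, f i w) (p : E) :
    gradient F p = (n : ℝ)⁻¹ • ∑ i, gradient (f i) p := by
  have h1 : ∀ i : Fin n, HasFDerivAt (f i)
      ((InnerProductSpace.toDual ℝ E) (gradient (f i) p)) p :=
    fun i => ((hdiff i) p).hasGradientAt.hasFDerivAt
  have h2 : HasFDerivAt F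
      ((n : ℝ)⁻¹ • ∑ i, (InnerProductSpace.toDual ℝ E) (gradient (f i) p)) p := by
    rw [hF]
    exact (HasFDerivAt.fun_sum (fun i _ => h1 i)).const_mul _
  have h3 : ((n : ℝ)⁻¹ • ∑ i, (InnerProductSpace.toDual ℝ E) (gradient (f i) p))
      = (InnerProductSpace.toDual ℝ E) ((n : ℝ)⁻¹ • ∑ i, gradient (f i) p) := by
    simp [map_sum]
  rw [h3] at h2
  simpa only [LinearIsometryEquiv.symm_apply_apply] using h2.hasGradientAt.gradient

/-- properties of the estimate functions Φ_t of Acc-DNGD-NSC: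
(1) Φ_t(ω) ≤ f(ω) + λ_t(Φ₀(ω) − f(ω)); and (2) Φ_t(ω) = φ_t* + (γ_t/2)‖ω − v̄(t)‖²
with φ_t* given by the stated recursion. -/
theorem stmt_12 (n N : ℕ) (hn : 0 < n)
    (f : Fin n → EuclideanSpace ℝ (Fin N) → ℝ)
    (L : ℝ) (hL : 0 < L)
    (hdiff : ∀ i, Differentiable ℝ (f i))
    (hconv : ∀ i, ConvexOn ℝ Set.univ (f i))
    (hsmooth : ∀ i u w, ‖gradient (f i) u - gradient (f i) w‖ ≤ L * ‖u - w‖)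
    -- consensus matrix
    (W : Matrix (Fin n) (Fin n) ℝ)
    (hWnonneg : ∀ i j, 0 ≤ W i j)
    (hWrow : ∀ i, ∑ j, W i j = 1)
    (hWcol : ∀ j, ∑ i, W i j = 1)
    (σ : ℝ) (hσ0 : 0 < σ) (hσ1 : σ < 1)
    (havg : ∀ ω : EuclideanSpace ℝ (Fin n),
      ‖toE (fun i => ∑ j, W i j * ω j) - toE (fun _ => (n : ℝ)⁻¹ * ∑ j, ω j)‖ ≤
        σ * ‖ω - toE (fun _ => (n : ℝ)⁻¹ * ∑ j, ω j)‖)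
    -- step sizes and the α-sequence
    (ηs : ℕ → ℝ) (hηmem : ∀ t, ηs t ∈ Set.Ioo (0 : ℝ) (1 / L))
    (α : ℕ → ℝ) (hα0 : α 0 = Real.sqrt (ηs 0 * L)) (hα0mem : α 0 ∈ Set.Ioo (0 : ℝ) 1)
    (hαmem : ∀ t : ℕ, α (t + 1) ∈ Set.Ioo (0 : ℝ) 1)
    (hαrec : ∀ t : ℕ, α (t + 1) ^ 2 = ηs (t + 1) / ηs t * (1 - α (t + 1)) * α t ^ 2)
    -- the global objective
    (F : EuclideanSpace ℝ (Fin N) → ℝ) (hF : F = fun w => (n : ℝ)⁻¹ * ∑ i, f i w)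
    -- the algorithm
    (x v y s : ℕ → Fin n → EuclideanSpace ℝ (Fin N))
    (hx0 : ∀ i, x 0 i = 0) (hv0 : ∀ i, v 0 i = 0) (hy0 : ∀ i, y 0 i = 0)
    (hs0 : ∀ i, s 0 i = gradient F 0)
    (hxup : ∀ t i, x (t + 1) i = (∑ j, W i j • y t j) - ηs t • s t i)
    (hvup : ∀ t i, v (t + 1) i = (∑ j, W i j • v t j) - (ηs t / α t) • s t i)
    (hyup : ∀ t i, y (t + 1) i = (1 - α (t + 1)) • x (t + 1) i + α (t + 1) • v (t + 1) i)
    (hsup : ∀ t i, s (t + 1) i =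
      (∑ j, W i j • s t j) + gradient (f i) (y (t + 1) i) - gradient (f i) (y t i))
    -- averages, inexact gradient and f̂
    (xbar vbar ybar g : ℕ → EuclideanSpace ℝ (Fin N))
    (hxbar : ∀ t, xbar t = (n : ℝ)⁻¹ • ∑ i, x t i)
    (hvbar : ∀ t, vbar t = (n : ℝ)⁻¹ • ∑ i, v t i)
    (hybar : ∀ t, ybar t = (n : ℝ)⁻¹ • ∑ i, y t i)
    (hg : ∀ t, g t = (n : ℝ)⁻¹ • ∑ i, gradient (f i) (y t i))
    (fhat : ℕ → ℝ)
    (hfhat : ∀ t, fhat t =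
      (n : ℝ)⁻¹ * ∑ i, (f i (y t i) + ⟪gradient (f i) (y t i), ybar t - y t i⟫))
    -- the sequences γ_t and λ_t
    (γ : ℕ → ℝ) (hγ0 : γ 0 = L / (1 - α 0)) (hγrec : ∀ t, γ (t + 1) = (1 - α t) * γ t)
    (lam : ℕ → ℝ) (hlam0 : lam 0 = 1) (hlamrec : ∀ t, lam (t + 1) = (1 - α t) * lam t)
    -- the estimate functions Φ_t
    (Φ : ℕ → EuclideanSpace ℝ (Fin N) → ℝ)
    (hΦ0 : ∀ ω, Φ 0 ω = F (xbar 0) + γ 0 / 2 * ‖ω - vbar 0‖ ^ 2)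
    (hΦrec : ∀ t ω, Φ (t + 1) ω = (1 - α t) * Φ t ω + α t * (fhat t + ⟪g t, ω - ybar t⟫))
    -- the sequence φ_t*
    (φs : ℕ → ℝ) (hφs0 : φs 0 = F (xbar 0))
    (hφsrec : ∀ t, φs (t + 1) = (1 - α t) * φs t + α t * fhat t - ηs t / 2 * ‖g t‖ ^ 2
        + α t * ⟪g t, vbar t - ybar t⟫) :
    (∀ t ω, Φ t ω ≤ F ω + lam t * (Φ 0 ω - F ω)) ∧
    (∀ t ω, Φ t ω = φs t + γ t / 2 * ‖ω - vbar t‖ ^ 2) := by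
  have hα : ∀ t, 0 < α t ∧ α t < 1 := by
    intro t
    cases t with
    | zero => exact ⟨hα0mem.1, hα0mem.2⟩
    | succ t => exact ⟨(hαmem t).1, (hαmem t).2⟩
  have hη : ∀ t, 0 < ηs t := fun t => (hηmem t).1
  -- the key convexity lower bound
  have hkey : ∀ t ω, fhat t + ⟪g t, ω - ybar t⟫ ≤ F ω := by
    intro t ω
    have hginner : ⟪g t, ω - ybar t⟫
        = (n:ℝ)⁻¹ * ∑ i, ⟪gradient (f i) (y t i), ω - ybar t⟫ := by
      rw [hg t, real_inner_smul_left, sum_inner]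
    rw [hfhat t, hginner, ← mul_add, ← Finset.sum_add_distrib, hF]
    apply mul_le_mul_of_nonneg_left _ (by positivity)
    apply Finset.sum_le_sum
    intro i _
    have h1 := grad_convex_ineq (f i) (hdiff i) (hconv i) (y t i) ω
    have h2 : ⟪gradient (f i) (y t i), ybar t - y t i⟫
        + ⟪gradient (f i) (y t i), ω - ybar t⟫
        = ⟪gradient (f i) (y t i), ω - y t i⟫ := by
      rw [← inner_add_right]
      congr 1
      abel
    linarith
  -- Part 1
  have part1 : ∀ t ω, Φ t ω ≤ F ω + lam t * (Φ 0 ω - F ω) := by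
    intro t
    induction t with
    | zero => intro ω; rw [hlam0]; ring_nf; exact le_refl _
    | succ t ih =>
      intro ω
      rw [hΦrec t ω, hlamrec t]
      have h1 := ih ω
      have h2 := hkey t ω
      have e1 : (1 - α t) * Φ t ω ≤ (1 - α t) * (F ω + lam t * (Φ 0 ω - F ω)) :=
        mul_le_mul_of_nonneg_left h1 (by linarith [(hα t).2])
      have e2 : α t * (fhat t + ⟪g t, ω - ybar t⟫) ≤ α t * F ω :=
        mul_le_mul_of_nonneg_left h2 (le_of_lt (hα t).1)
      nlinarith
  -- averaged gradient tracking
  have hWs : ∀ (u : Fin n → EuclideanSpace ℝ (Fin N)),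
      ∑ i, ∑ j, W i j • u j = ∑ j, u j := by
    intro u
    rw [Finset.sum_comm]
    refine Finset.sum_congr rfl fun j _ => ?_
    rw [← Finset.sum_smul, hWcol j, one_smul]
  have hsbar : ∀ t, (n:ℝ)⁻¹ • ∑ i, s t i = g t := by
    intro t
    induction t with
    | zero =>
      have : gradient F 0 = g 0 := by
        rw [grad_avg f hdiff F hF 0, hg 0]
        congr 1
        refine Finset.sum_congr rfl fun i _ => ?_
        rw [hy0 i]
      simp only [hs0, Finset.sum_const, Finset.card_univ, Fintype.card_fin]
      rw [← Nat.cast_smul_eq_nsmul ℝ, smul_smul]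
      have hmul : ((n:ℝ)⁻¹ * (n:ℝ)) = 1 := by
        field_simp
      rw [hmul, one_smul, this]
    | succ t ih =>
      have hsum : ∑ i, s (t+1) i
          = (∑ i, s t i) + (∑ i, gradient (f i) (y (t+1) i))
            - ∑ i, gradient (f i) (y t i) := by
        simp only [hsup]
        rw [Finset.sum_sub_distrib, Finset.sum_add_distrib, hWs]
      rw [hsum, smul_sub, smul_add, ih, ← hg, ← hg]
      abel
  have hvbarrec : ∀ t, vbar (t+1) = vbar t - (ηs t / α t) • g t := by
    intro t
    rw [hvbar (t+1), hvbar t]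
    have hsum : ∑ i, v (t+1) i
        = (∑ i, v t i) - (ηs t / α t) • ∑ i, s t i := by
      simp only [hvup]
      rw [Finset.sum_sub_distrib, hWs, ← Finset.smul_sum]
    rw [hsum, smul_sub, smul_comm, hsbar t]
  -- positivity of γ and the identity α_t² = η_t γ_{t+1}
  have hγpos : ∀ t, 0 < γ t := by
    intro t
    induction t with
    | zero =>
      rw [hγ0]
      exact div_pos hL (by linarith [hα0mem.2])
    | succ t ih =>
      rw [hγrec t]
      exact mul_pos (by linarith [(hα t).2]) ih
  have hαγ : ∀ t, α t ^ 2 = ηs t * γ (t+1) := by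
    intro t
    induction t with
    | zero =>
      have hne : (1:ℝ) - α 0 ≠ 0 := by
        have := hα0mem.2
        intro h
        linarith
      have h2 : (1 - α 0) * (L / (1 - α 0)) = L := by
        field_simp
      rw [hγrec 0, hγ0, h2, hα0, Real.sq_sqrt (le_of_lt (mul_pos (hη 0) hL))]
    | succ t ih =>
      rw [hαrec t, ih, hγrec (t+1)]
      field_simp [ne_of_gt (hη t)]
  -- Part 2
  have part2 : ∀ t ω, Φ t ω = φs t + γ t / 2 * ‖ω - vbar t‖ ^ 2 := by
    intro t
    induction t with
    | zero => intro ω; rw [hΦ0, hφs0]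
    | succ t ih =>
      intro ω
      rw [hΦrec t ω, ih ω, hφsrec t, hγrec t, hvbarrec t]
      have hA : ⟪g t, ω - ybar t⟫ = ⟪g t, ω - vbar t⟫ + ⟪g t, vbar t - ybar t⟫ := by
        rw [← inner_add_right]
        congr 1
        abel
      have hrw : ω - (vbar t - (ηs t / α t) • g t)
          = (ω - vbar t) + (ηs t / α t) • g t := by abel
      have hnorm : ‖ω - (vbar t - (ηs t / α t) • g t)‖^2
          = ‖ω - vbar t‖^2 + 2*(ηs t/α t)*⟪g t, ω - vbar t⟫
            + (ηs t/α t)^2*‖g t‖^2 := by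
        rw [hrw, norm_add_sq_real]
        have h1 : ⟪ω - vbar t, (ηs t / α t) • g t⟫
            = (ηs t / α t) * ⟪g t, ω - vbar t⟫ := by
          rw [real_inner_smul_right, real_inner_comm]
        have h2 : ‖(ηs t / α t) • g t‖ ^ 2 = (ηs t / α t)^2 * ‖g t‖^2 := by
          rw [norm_smul, mul_pow, Real.norm_eq_abs, sq_abs]
        rw [h1, h2]
        ring
      rw [hA, hnorm]
      have hαγt := hαγ t
      rw [hγrec t] at hαγt
      have hα0' : α t ≠ 0 := ne_of_gt (hα t).1
      have hc1 : (1 - α t) * γ t * (ηs t / α t) = α t := by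
        field_simp
        linear_combination -hαγt
      have hc2 : (1 - α t) * γ t / 2 * (ηs t / α t)^2 = ηs t / 2 := by
        field_simp
        linear_combination (-ηs t) * hαγt
      linear_combination (-⟪g t, ω - vbar t⟫) * hc1 - ‖g t‖^2 * hc2
  exact ⟨part1, part2⟩
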